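/- Let α₁,…,α_N be distinct vectors in ℝⁿ, ρ > 0, and let 1 ≤ p, q, r ≤ ∞ satisfy 1/p + 1/q = 1/r. Define the bilinear operator S_{α,ρ} on N-tuples of functions by S_{α,ρ}(f,g)(x) = (f_k(x + ρα_k) g_k(x − α_k))_{k=1}^N. Then the operator norm of S_{α,ρ} from L^p(ℝⁿ; ℓ²_N) × L^q(ℝⁿ; ℓ²_N) to L^r(ℝⁿ; ℓ²_N) is at least max{N^{1/p − 1/2}, N^{1/q − 1/2}}. -/

import Mathlib

open Metric MeasureTheory ENNReal

/-- Sum of indicators of pairwise disjoint sets equals the indicator of the union. -/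
lemma SOLB.sum_indicator_disjoint {N : ℕ} {E : Type*} (s : Fin N → Set E)
    (hd : Pairwise (Function.onFun Disjoint s)) (x : E) :
    ∑ k : Fin N, (s k).indicator (fun _ => (1 : ℝ)) x
      = (⋃ k, s k).indicator (fun _ => (1 : ℝ)) x := by
  by_cases hx : x ∈ ⋃ k, s k
  · obtain ⟨k0, hk0⟩ := Set.mem_iUnion.1 hx
    rw [Set.indicator_of_mem hx, Finset.sum_eq_single k0]
    · rw [Set.indicator_of_mem hk0]
    · intro j _ hj
      exact Set.indicator_of_notMem
        (fun hxj => Set.disjoint_left.1 (hd hj) hxj hk0) _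
    · intro h; exact absurd (Finset.mem_univ k0) h
  · rw [Set.indicator_of_notMem hx]
    exact Finset.sum_eq_zero fun j _ =>
      Set.indicator_of_notMem (fun hxj => hx (Set.mem_iUnion.2 ⟨j, hxj⟩)) _

/-- eLpNorm of the square root of a sum of indicators of disjoint balls of the same radius. -/
lemma SOLB.eLpNorm_disjoint {n N : ℕ} (hN : 0 < N) (c : Fin N → EuclideanSpace ℝ (Fin n))
    {ε : ℝ} (hε : 0 < ε)
    (hd : Pairwise (Function.onFun Disjoint fun k => ball (c k) ε))
    (p : ℝ≥0∞) (hp : p ≠ 0) (F : EuclideanSpace ℝ (Fin n) → ℝ)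
    (hF : ∀ x, F x = Real.sqrt (∑ k : Fin N, (ball (c k) ε).indicator (fun _ => (1 : ℝ)) x)) :
    eLpNorm F p volume
      = ((N : ℝ≥0∞) * volume (ball (0 : EuclideanSpace ℝ (Fin n)) ε)) ^ (1 / p).toReal := by
  have hFe : F = (⋃ k, ball (c k) ε).indicator (fun _ => (1 : ℝ)) := by
    funext x
    rw [hF x, SOLB.sum_indicator_disjoint _ hd x]
    by_cases hx : x ∈ ⋃ k, ball (c k) ε <;> simp [hx]
  have hmeas : MeasurableSet (⋃ k, ball (c k) ε) :=
    MeasurableSet.iUnion fun k => measurableSet_ball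
  have hμ : volume (⋃ k, ball (c k) ε)
      = (N : ℝ≥0∞) * volume (ball (0 : EuclideanSpace ℝ (Fin n)) ε) := by
    rw [measure_iUnion hd fun k => measurableSet_ball, tsum_fintype]
    have : ∀ k : Fin N, volume (ball (c k) ε)
        = volume (ball (0 : EuclideanSpace ℝ (Fin n)) ε) := fun k =>
      Measure.addHaar_ball_center volume (c k) ε
    simp [this, Finset.sum_const, Finset.card_univ, nsmul_eq_mul]
  have hμ0 : volume (⋃ k, ball (c k) ε) ≠ 0 := by
    rw [hμ]
    exact mul_ne_zero ((Nat.cast_ne_zero (R := ℝ≥0∞)).2 hN.ne')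
      (measure_ball_pos volume _ hε).ne'
  rw [hFe, eLpNorm_indicator_const' hmeas hμ0 hp, hμ]
  simp [one_div, ENNReal.toReal_inv]

/-- eLpNorm of the ℓ² norm of N identical copies of an indicator of a ball. -/
lemma SOLB.eLpNorm_collapsed {n N : ℕ} (a : EuclideanSpace ℝ (Fin n))
    {ε : ℝ} (hε : 0 < ε) (p : ℝ≥0∞) (hp : p ≠ 0) :
    eLpNorm (fun x => Real.sqrt (∑ k : Fin N,
        ‖(ball a ε).indicator (fun _ => (1 : ℂ)) x‖ ^ 2)) p volume
      = ENNReal.ofReal (Real.sqrt N)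
          * volume (ball (0 : EuclideanSpace ℝ (Fin n)) ε) ^ (1 / p).toReal := by
  have hFe : (fun x => Real.sqrt (∑ k : Fin N,
      ‖(ball a ε).indicator (fun _ => (1 : ℂ)) x‖ ^ 2))
      = (ball a ε).indicator (fun _ => Real.sqrt N) := by
    funext x
    by_cases hx : x ∈ ball a ε <;>
      simp [hx, Finset.sum_const, Finset.card_univ]
  rw [hFe, eLpNorm_indicator_const' measurableSet_ball (measure_ball_pos volume a hε).ne' hp,
    Measure.addHaar_ball_center volume a ε]
  congr 1
  · rw [← ofReal_norm, Real.norm_of_nonneg (Real.sqrt_nonneg _)]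
  · simp [one_div, ENNReal.toReal_inv]

/-- The key algebraic step in `ℝ≥0∞`. -/
lemma SOLB.algebra {N : ℕ} (hN : 0 < N) {m : ℝ≥0∞} (hm0 : m ≠ 0) (hmt : m ≠ ∞)
    {C : ℝ} (hC : 0 ≤ C) {s t : ℝ} (hs : 0 ≤ s) (ht : 0 ≤ t)
    (h : ((N : ℝ≥0∞) * m) ^ (s + t)
      ≤ ENNReal.ofReal C * (ENNReal.ofReal (Real.sqrt N) * m ^ s) * ((N : ℝ≥0∞) * m) ^ t) :
    (N : ℝ) ^ (s - 1 / 2) ≤ C := by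
  have hN0 : (N : ℝ≥0∞) ≠ 0 := Nat.cast_ne_zero.2 hN.ne'
  have hNt : (N : ℝ≥0∞) ≠ ∞ := natCast_ne_top N
  have hNm0 : (N : ℝ≥0∞) * m ≠ 0 := mul_ne_zero hN0 hm0
  have hNmt : (N : ℝ≥0∞) * m ≠ ∞ := mul_ne_top hNt hmt
  rw [ENNReal.rpow_add _ _ hNm0 hNmt] at h
  have h2 : ((N : ℝ≥0∞) * m) ^ s ≤ ENNReal.ofReal C * (ENNReal.ofReal (Real.sqrt N) * m ^ s) :=
    (ENNReal.mul_le_mul_iff_left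
      (ENNReal.rpow_pos (pos_iff_ne_zero.2 hNm0) hNmt).ne'
      (ENNReal.rpow_ne_top_of_nonneg ht hNmt)).1 h
  rw [ENNReal.mul_rpow_of_nonneg _ _ hs, ← mul_assoc] at h2
  have h3 : (N : ℝ≥0∞) ^ s ≤ ENNReal.ofReal C * ENNReal.ofReal (Real.sqrt N) :=
    (ENNReal.mul_le_mul_iff_left
      (ENNReal.rpow_pos (pos_iff_ne_zero.2 hm0) hmt).ne'
      (ENNReal.rpow_ne_top_of_nonneg hs hmt)).1 h2
  rw [← ENNReal.ofReal_mul hC, ← ENNReal.ofReal_natCast,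
    ENNReal.ofReal_rpow_of_pos (by exact_mod_cast hN)] at h3
  have h4 : (N : ℝ) ^ s ≤ C * Real.sqrt N :=
    (ENNReal.ofReal_le_ofReal_iff (by positivity)).1 h3
  have hNR : (0 : ℝ) < N := by exact_mod_cast hN
  rw [Real.sqrt_eq_rpow] at h4
  rw [Real.rpow_sub hNR, div_le_iff₀ (Real.rpow_pos_of_pos hNR _)]
  linarith [h4]

theorem shift_operator_norm_lower_bound (n N : ℕ) (hN : 0 < N)
    (α : Fin N → EuclideanSpace ℝ (Fin n)) (hα : Function.Injective α)
    (ρ : ℝ) (hρ : 0 < ρ) (p q r : ℝ≥0∞) (hp : 1 ≤ p) (hq : 1 ≤ q) (hr : 1 ≤ r)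
    (hpqr : 1 / p + 1 / q = 1 / r) (C : ℝ) (hC : 0 ≤ C)
    (hbound : ∀ f g : Fin N → EuclideanSpace ℝ (Fin n) → ℂ,
      eLpNorm (fun x => Real.sqrt (∑ k : Fin N,
          ‖f k (x + ρ • α k) * g k (x - α k)‖ ^ 2)) r volume ≤
        ENNReal.ofReal C *
          eLpNorm (fun x => Real.sqrt (∑ k : Fin N, ‖f k x‖ ^ 2)) p volume *
          eLpNorm (fun x => Real.sqrt (∑ k : Fin N, ‖g k x‖ ^ 2)) q volume) :
    max ((N : ℝ) ^ ((1 / p).toReal - 1 / 2)) ((N : ℝ) ^ ((1 / q).toReal - 1 / 2)) ≤ C := by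
  classical
  -- separation constant
  obtain ⟨ε₀, hε₀, hsep⟩ : ∃ ε₀ : ℝ, 0 < ε₀ ∧ ∀ j k : Fin N, j ≠ k → 2 * ε₀ ≤ dist (α j) (α k) := by
    set S : Finset ℝ := Finset.image (fun jk : Fin N × Fin N => dist (α jk.1) (α jk.2))
      (Finset.univ.filter fun jk : Fin N × Fin N => jk.1 ≠ jk.2) with hS
    by_cases hSne : S.Nonempty
    · have hpos : ∀ d ∈ S, 0 < d := by
        intro d hd
        simp only [hS, Finset.mem_image, Finset.mem_filter, Finset.mem_univ, true_and] at hd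
        obtain ⟨⟨j, k⟩, hjk, rfl⟩ := hd
        exact dist_pos.2 fun h => hjk (hα h)
      refine ⟨S.min' hSne / 2, by linarith [hpos _ (S.min'_mem hSne)], ?_⟩
      intro j k hjk
      have hmem : dist (α j) (α k) ∈ S := by
        simp only [hS, Finset.mem_image, Finset.mem_filter, Finset.mem_univ, true_and]
        exact ⟨(j, k), hjk, rfl⟩
      have := S.min'_le _ hmem
      linarith
    · refine ⟨1, one_pos, fun j k hjk => absurd ?_ hSne⟩
      refine ⟨dist (α j) (α k), ?_⟩
      simp only [hS, Finset.mem_image, Finset.mem_filter, Finset.mem_univ, true_and]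
      exact ⟨(j, k), hjk, rfl⟩
  set ε : ℝ := min 1 ρ * ε₀ with hεdef
  have hminpos : 0 < min 1 ρ := lt_min one_pos hρ
  have hε : 0 < ε := mul_pos hminpos hε₀
  -- disjointness of scaled families
  have hdisj : ∀ t : ℝ, min 1 ρ ≤ |t| →
      Pairwise (Function.onFun Disjoint fun k : Fin N => ball (t • α k) ε) := by
    intro t ht j k hjk
    apply ball_disjoint_ball
    rw [dist_smul₀, Real.norm_eq_abs]
    have h1 : 2 * ε₀ ≤ dist (α j) (α k) := hsep j k hjk
    nlinarith [abs_nonneg t, dist_nonneg (x := α j) (y := α k)]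
  have habs1 : min 1 ρ ≤ |(-ρ : ℝ)| := by rw [abs_neg, abs_of_pos hρ]; exact min_le_right _ _
  have habs2 : min 1 ρ ≤ |(-(ρ + 1) : ℝ)| := by
    rw [abs_neg, abs_of_pos (by linarith)]
    calc min 1 ρ ≤ 1 := min_le_left _ _
    _ ≤ ρ + 1 := by linarith
  have habs3 : min 1 ρ ≤ |(1 : ℝ)| := by rw [abs_one]; exact min_le_left _ _
  have habs4 : min 1 ρ ≤ |(ρ + 1 : ℝ)| := by
    rw [abs_of_pos (by linarith)]
    calc min 1 ρ ≤ 1 := min_le_left _ _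
    _ ≤ ρ + 1 := by linarith
  set m : ℝ≥0∞ := volume (ball (0 : EuclideanSpace ℝ (Fin n)) ε) with hm
  have hm0 : m ≠ 0 := (measure_ball_pos volume _ hε).ne'
  have hmt : m ≠ ∞ := measure_ball_lt_top.ne
  have hp0 : p ≠ 0 := fun h => by simp [h] at hp
  have hq0 : q ≠ 0 := fun h => by simp [h] at hq
  have hr0 : r ≠ 0 := fun h => by simp [h] at hr
  -- exponent arithmetic
  have hsum : (1 / r).toReal = (1 / p).toReal + (1 / q).toReal := by
    rw [← hpqr, ENNReal.toReal_add]
    · rw [one_div]; exact ENNReal.inv_ne_top.2 hp0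
    · rw [one_div]; exact ENNReal.inv_ne_top.2 hq0
  -- Case 1 : f collapsed at 0, g at (-(ρ+1)) • α k, products supported on balls at (-ρ) • α k
  have case1 : (N : ℝ) ^ ((1 / p).toReal - 1 / 2) ≤ C := by
    have key := hbound (fun _ => (ball (0 : EuclideanSpace ℝ (Fin n)) ε).indicator fun _ => (1 : ℂ))
      (fun k => (ball (((-(ρ + 1) : ℝ)) • α k) ε).indicator fun _ => (1 : ℂ))
    have hLHS : eLpNorm (fun x => Real.sqrt (∑ k : Fin N,
        ‖(ball (0 : EuclideanSpace ℝ (Fin n)) ε).indicator (fun _ => (1 : ℂ)) (x + ρ • α k) *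
          (ball (((-(ρ + 1) : ℝ)) • α k) ε).indicator (fun _ => (1 : ℂ)) (x - α k)‖ ^ 2))
        r volume = ((N : ℝ≥0∞) * m) ^ (1 / r).toReal := by
      apply SOLB.eLpNorm_disjoint hN (fun k => ((-ρ : ℝ) • α k)) hε (hdisj _ habs1) r hr0
      intro x
      congr 1
      apply Finset.sum_congr rfl
      intro k _
      have h1 : x + ρ • α k ∈ ball (0 : EuclideanSpace ℝ (Fin n)) ε
          ↔ x ∈ ball (((-ρ : ℝ)) • α k) ε := by
        rw [mem_ball, mem_ball, dist_eq_norm, dist_eq_norm]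
        have he : x + ρ • α k - 0 = x - (-ρ : ℝ) • α k := by module
        rw [he]
      have h2 : x - α k ∈ ball (((-(ρ + 1) : ℝ)) • α k) ε
          ↔ x ∈ ball (((-ρ : ℝ)) • α k) ε := by
        rw [mem_ball, mem_ball, dist_eq_norm, dist_eq_norm]
        have he : x - α k - (-(ρ + 1) : ℝ) • α k = x - (-ρ : ℝ) • α k := by module
        rw [he]
      by_cases hx : x ∈ ball (((-ρ : ℝ)) • α k) ε
      · rw [Set.indicator_of_mem (h1.2 hx), Set.indicator_of_mem (h2.2 hx),
          Set.indicator_of_mem hx]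
        simp
      · rw [Set.indicator_of_notMem (fun h => hx (h1.1 h)), Set.indicator_of_notMem hx]
        simp
    have hFnorm : eLpNorm (fun x => Real.sqrt (∑ k : Fin N,
        ‖(ball (0 : EuclideanSpace ℝ (Fin n)) ε).indicator (fun _ => (1 : ℂ)) x‖ ^ 2)) p volume
        = ENNReal.ofReal (Real.sqrt N) * m ^ (1 / p).toReal :=
      SOLB.eLpNorm_collapsed (0 : EuclideanSpace ℝ (Fin n)) hε p hp0
    have hGnorm : eLpNorm (fun x => Real.sqrt (∑ k : Fin N,
        ‖(ball (((-(ρ + 1) : ℝ)) • α k) ε).indicator (fun _ => (1 : ℂ)) x‖ ^ 2))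
        q volume = ((N : ℝ≥0∞) * m) ^ (1 / q).toReal := by
      apply SOLB.eLpNorm_disjoint hN (fun k => (((-(ρ + 1) : ℝ)) • α k)) hε
        (hdisj _ habs2) q hq0
      intro x
      congr 1
      apply Finset.sum_congr rfl
      intro k _
      by_cases hx : x ∈ ball (((-(ρ + 1) : ℝ)) • α k) ε
      · rw [Set.indicator_of_mem hx, Set.indicator_of_mem hx]; simp
      · rw [Set.indicator_of_notMem hx, Set.indicator_of_notMem hx]; simp
    rw [hLHS, hFnorm, hGnorm, hsum] at key
    exact SOLB.algebra hN hm0 hmt hC ENNReal.toReal_nonneg ENNReal.toReal_nonneg key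
  -- Case 2 : g collapsed at 0, f at (ρ+1) • α k, products supported on balls at α k
  have case2 : (N : ℝ) ^ ((1 / q).toReal - 1 / 2) ≤ C := by
    have key := hbound (fun k => (ball (((ρ + 1) : ℝ) • α k) ε).indicator fun _ => (1 : ℂ))
      (fun _ => (ball (0 : EuclideanSpace ℝ (Fin n)) ε).indicator fun _ => (1 : ℂ))
    have hLHS : eLpNorm (fun x => Real.sqrt (∑ k : Fin N,
        ‖(ball (((ρ + 1) : ℝ) • α k) ε).indicator (fun _ => (1 : ℂ)) (x + ρ • α k) *
          (ball (0 : EuclideanSpace ℝ (Fin n)) ε).indicator (fun _ => (1 : ℂ)) (x - α k)‖ ^ 2))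
        r volume = ((N : ℝ≥0∞) * m) ^ (1 / r).toReal := by
      apply SOLB.eLpNorm_disjoint hN (fun k => (((1 : ℝ)) • α k)) hε (hdisj _ habs3) r hr0
      intro x
      congr 1
      apply Finset.sum_congr rfl
      intro k _
      have h1 : x + ρ • α k ∈ ball (((ρ + 1) : ℝ) • α k) ε
          ↔ x ∈ ball (((1 : ℝ)) • α k) ε := by
        rw [mem_ball, mem_ball, dist_eq_norm, dist_eq_norm]
        have he : x + ρ • α k - ((ρ + 1) : ℝ) • α k = x - (1 : ℝ) • α k := by module
        rw [he]
      have h2 : x - α k ∈ ball (0 : EuclideanSpace ℝ (Fin n)) ε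
          ↔ x ∈ ball (((1 : ℝ)) • α k) ε := by
        rw [mem_ball, mem_ball, dist_eq_norm, dist_eq_norm]
        have he : x - α k - 0 = x - (1 : ℝ) • α k := by module
        rw [he]
      by_cases hx : x ∈ ball (((1 : ℝ)) • α k) ε
      · rw [Set.indicator_of_mem (h1.2 hx), Set.indicator_of_mem (h2.2 hx),
          Set.indicator_of_mem hx]
        simp
      · rw [Set.indicator_of_notMem (fun h => hx (h1.1 h)), Set.indicator_of_notMem hx]
        simp
    have hGnorm : eLpNorm (fun x => Real.sqrt (∑ k : Fin N,
        ‖(ball (0 : EuclideanSpace ℝ (Fin n)) ε).indicator (fun _ => (1 : ℂ)) x‖ ^ 2)) q volume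
        = ENNReal.ofReal (Real.sqrt N) * m ^ (1 / q).toReal :=
      SOLB.eLpNorm_collapsed (0 : EuclideanSpace ℝ (Fin n)) hε q hq0
    have hFnorm : eLpNorm (fun x => Real.sqrt (∑ k : Fin N,
        ‖(ball (((ρ + 1) : ℝ) • α k) ε).indicator (fun _ => (1 : ℂ)) x‖ ^ 2))
        p volume = ((N : ℝ≥0∞) * m) ^ (1 / p).toReal := by
      apply SOLB.eLpNorm_disjoint hN (fun k => ((((ρ + 1) : ℝ)) • α k)) hε
        (hdisj _ habs4) p hp0
      intro x
      congr 1
      apply Finset.sum_congr rfl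
      intro k _
      by_cases hx : x ∈ ball (((ρ + 1) : ℝ) • α k) ε
      · rw [Set.indicator_of_mem hx, Set.indicator_of_mem hx]; simp
      · rw [Set.indicator_of_notMem hx, Set.indicator_of_notMem hx]; simp
    rw [hLHS, hGnorm, hFnorm, hsum] at key
    have key' : ((N : ℝ≥0∞) * m) ^ ((1 / q).toReal + (1 / p).toReal)
        ≤ ENNReal.ofReal C * (ENNReal.ofReal (Real.sqrt N) * m ^ (1 / q).toReal) *
          ((N : ℝ≥0∞) * m) ^ (1 / p).toReal := by
      rw [add_comm]
      calc ((N : ℝ≥0∞) * m) ^ ((1 / p).toReal + (1 / q).toReal)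
          ≤ ENNReal.ofReal C * ((N : ℝ≥0∞) * m) ^ (1 / p).toReal *
            (ENNReal.ofReal (Real.sqrt N) * m ^ (1 / q).toReal) := key
        _ = ENNReal.ofReal C * (ENNReal.ofReal (Real.sqrt N) * m ^ (1 / q).toReal) *
            ((N : ℝ≥0∞) * m) ^ (1 / p).toReal := by ring
    exact SOLB.algebra hN hm0 hmt hC ENNReal.toReal_nonneg ENNReal.toReal_nonneg key'
  exact max_le case1 case2
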